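/- Let p be a prime, N ≥ 1 a natural number, and for m, j ∈ ℕ write q_j^{(m)} := ⌊j / p^m⌋. For a multi-index k ∈ ℕ^N write |k| := k_1 + ⋯ + k_N, and for x ∈ ℤ_p let v_p(x) denote the p-adic valuation (with v_p(0) = ∞). Let (a_k)_{k ∈ ℕ^N} be a family of elements of ℤ_p such that v_p(a_k) → ∞ as |k| → ∞. Then the following are equivalent: (i) there exists m ∈ ℕ such that for every k the element ∏_{i=1}^N q^{(m)}_{k_i}! divides a_k in ℤ_p and v_p(a_k) − v_p(∏_{i=1}^N q^{(m)}_{k_i}!) → ∞ as |k| → ∞; (ii) there exist real constants α > 0 and β such that for every i ∈ ℕ and every k, if p^{i+1} does not divide a_k then |k| ≤ α·i + β; (iii) there exist real constants η > 0 and c such that v_p(a_k) ≥ η·|k| + c for every k. -/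

import Mathlib

open scoped BigOperators


section auxSec
variable {p : ℕ} [hp : Fact p.Prime]

private lemma stmt7_val_natCast (n : ℕ) : ((n : ℤ_[p])).valuation = (padicValNat p n : ℤ) := by
  have h1 : ((n : ℤ_[p])).valuation = Padic.valuation ((n : ℚ_[p])) := by
    rw [← PadicInt.valuation_coe, PadicInt.coe_natCast]
  rw [h1, Padic.valuation_natCast]

private lemma stmt7_norm_natCast (n : ℕ) (hn : n ≠ 0) :
    ‖(n : ℤ_[p])‖ = (p : ℝ) ^ (-(padicValNat p n : ℤ)) := by
  rw [PadicInt.norm_eq_zpow_neg_valuation (by exact_mod_cast hn), stmt7_val_natCast]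

private lemma stmt7_natCast_dvd_pow (n : ℕ) (hn : n ≠ 0) :
    (n : ℤ_[p]) ∣ (p : ℤ_[p]) ^ (padicValNat p n) := by
  have hz : (n : ℤ_[p]) ≠ 0 := by exact_mod_cast hn
  have hval : ((n : ℤ_[p])).valuation = padicValNat p n := by
    exact_mod_cast stmt7_val_natCast (p := p) n
  conv_lhs => rw [PadicInt.unitCoeff_spec hz, hval]
  exact (Units.mul_left_dvd (u := PadicInt.unitCoeff hz)).mpr dvd_rfl

private lemma stmt7_norm_le_iff_dvd (x : ℤ_[p]) (n : ℕ) :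
    ‖x‖ ≤ (p : ℝ) ^ (-(n : ℤ)) ↔ (p : ℤ_[p]) ^ n ∣ x := by
  rw [PadicInt.norm_le_pow_iff_mem_span_pow, Ideal.mem_span_singleton]

private lemma stmt7_div_le_pval_factorial (q : ℕ) : q / p ≤ padicValNat p (q.factorial) := by
  rcases lt_or_ge q p with h | h
  · simp [Nat.div_eq_of_lt h]
  · rw [padicValNat_factorial (Nat.lt_succ_self (Nat.log p q))]
    have h1 : 1 ∈ Finset.Ico 1 (Nat.log p q + 1) := by
      simp only [Finset.mem_Ico]
      exact ⟨le_refl 1, by have := Nat.log_pos hp.out.one_lt h; omega⟩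
    calc q / p = q / p ^ 1 := by rw [pow_one]
      _ ≤ _ := Finset.single_le_sum (f := fun i => q / p ^ i) (fun i _ => Nat.zero_le _) h1

private lemma stmt7_pval_factorial_le (q : ℕ) : padicValNat p (q.factorial) ≤ q := by
  have h := sub_one_mul_padicValNat_factorial (p := p) q
  have h2 : padicValNat p (q.factorial) ≤ (p - 1) * padicValNat p (q.factorial) :=
    Nat.le_mul_of_pos_left _ (by have := hp.out.two_le; omega)
  calc padicValNat p (q.factorial) ≤ (p - 1) * padicValNat p (q.factorial) := h2
    _ = q - (p.digits q).sum := h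
    _ ≤ q := Nat.sub_le _ _

end auxSec

section mainSec
variable {p : ℕ} [hp : Fact p.Prime] {N : ℕ}

private lemma stmt7_hp1 : (1:ℝ) < p := by exact_mod_cast hp.out.one_lt

private lemma stmt7_three_to_two (a : (Fin N →₀ ℕ) → ℤ_[p])
    (h : ∃ η c : ℝ, 0 < η ∧ ∀ k : Fin N →₀ ℕ,
        ‖a k‖ ≤ (p : ℝ) ^ (-(η * (∑ i, k i : ℕ) + c))) :
    ∃ α β : ℝ, 0 < α ∧ ∀ i : ℕ, ∀ k : Fin N →₀ ℕ,
      ¬ (p : ℤ_[p]) ^ (i + 1) ∣ a k → ((∑ i, k i : ℕ) : ℝ) ≤ α * i + β := by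
  obtain ⟨η, c, hη, hbd⟩ := h
  have hp1 : (1:ℝ) < p := stmt7_hp1
  refine ⟨1/η, (1-c)/η, by positivity, fun i k hndvd => ?_⟩
  set s : ℝ := ((∑ i, k i : ℕ) : ℝ) with hs
  have h1 : ¬ ‖a k‖ ≤ (p : ℝ) ^ (-((i+1 : ℕ) : ℤ)) := fun hc =>
    hndvd ((stmt7_norm_le_iff_dvd _ _).mp hc)
  have h2 : (p:ℝ) ^ (-((i+1:ℕ):ℤ)) < (p:ℝ) ^ (-(η * s + c)) :=
    lt_of_lt_of_le (lt_of_not_ge h1) (hbd k)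
  have hz : (p:ℝ) ^ (-((i+1:ℕ):ℤ)) = (p:ℝ) ^ (-((i:ℝ)+1)) := by
    rw [← Real.rpow_intCast]; congr 1; push_cast; ring
  rw [hz] at h2
  have h3 : -((i:ℝ)+1) < -(η * s + c) := (Real.rpow_lt_rpow_left_iff hp1).mp h2
  have h4 : η * s + c < i + 1 := by linarith
  rw [div_mul_eq_mul_div, one_mul, ← add_div, le_div_iff₀ hη]
  have h5 : s * η = η * s := mul_comm _ _
  linarith

private lemma stmt7_two_to_three (a : (Fin N →₀ ℕ) → ℤ_[p])
    (h : ∃ α β : ℝ, 0 < α ∧ ∀ i : ℕ, ∀ k : Fin N →₀ ℕ,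
      ¬ (p : ℤ_[p]) ^ (i + 1) ∣ a k → ((∑ i, k i : ℕ) : ℝ) ≤ α * i + β) :
    ∃ η c : ℝ, 0 < η ∧ ∀ k : Fin N →₀ ℕ,
        ‖a k‖ ≤ (p : ℝ) ^ (-(η * (∑ i, k i : ℕ) + c)) := by
  obtain ⟨α, β, hα, hbd⟩ := h
  have hp1 : (1:ℝ) < p := stmt7_hp1
  refine ⟨1/α, -(β/α), by positivity, fun k => ?_⟩
  set s : ℝ := ((∑ i, k i : ℕ) : ℝ) with hs
  by_cases hk : a k = 0
  · rw [hk, norm_zero]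
    positivity
  · set v : ℕ := (a k).valuation with hv
    have hnorm : ‖a k‖ = (p:ℝ) ^ (-(v:ℝ)) := by
      rw [PadicInt.norm_eq_zpow_neg_valuation hk, ← Real.rpow_intCast]
      congr 1
      rw [hv]
      push_cast
      ring
    have hndvd : ¬ (p:ℤ_[p]) ^ (v+1) ∣ a k := by
      intro hd
      have h1 := (stmt7_norm_le_iff_dvd _ _).mpr hd
      rw [hnorm, ← Real.rpow_intCast] at h1
      have h2 := (Real.rpow_le_rpow_left_iff hp1).mp h1
      push_cast at h2
      linarith
    have hsv : s ≤ α * v + β := hbd v k hndvd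
    rw [hnorm]
    rw [Real.rpow_le_rpow_left_iff hp1]
    rw [neg_le_neg_iff, div_mul_eq_mul_div, one_mul]
    rw [← sub_eq_add_neg, ← sub_div, div_le_iff₀ hα]
    have h5 : (v:ℝ) * α = α * v := mul_comm _ _
    linarith

private lemma stmt7_one_to_three (a : (Fin N →₀ ℕ) → ℤ_[p])
    (h : ∃ m : ℕ, ∃ b : (Fin N →₀ ℕ) → ℤ_[p],
        (∀ k : Fin N →₀ ℕ,
          a k = (∏ i, (Nat.factorial (k i / p ^ m) : ℤ_[p])) * b k) ∧
        ∀ t : ℝ, ∃ M : ℕ, ∀ k : Fin N →₀ ℕ,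
          M ≤ ∑ i, k i → ‖b k‖ ≤ (p : ℝ) ^ (-t)) :
    ∃ η c : ℝ, 0 < η ∧ ∀ k : Fin N →₀ ℕ,
        ‖a k‖ ≤ (p : ℝ) ^ (-(η * (∑ i, k i : ℕ) + c)) := by
  obtain ⟨m, b, hab, -⟩ := h
  have hp1 : (1:ℝ) < p := stmt7_hp1
  have hp0 : (0:ℝ) < p := lt_trans one_pos hp1
  refine ⟨((p:ℝ) ^ (m+1))⁻¹, -(N:ℝ), by positivity, fun k => ?_⟩
  set Pn : ℕ := p ^ (m+1) with hPn
  have hPnpos : 0 < Pn := pow_pos hp.out.pos _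
  have hPr : (0:ℝ) < (Pn:ℝ) := by exact_mod_cast hPnpos
  set r : ℕ := ∑ i, k i / Pn with hr
  set D : ℕ := ∏ i, Nat.factorial (k i / p ^ m) with hD
  have hD0 : D ≠ 0 := Finset.prod_ne_zero_iff.mpr fun i _ => (Nat.factorial_pos _).ne'
  have hdvd : p ^ r ∣ D := by
    rw [hr, hD, ← Finset.prod_pow_eq_pow_sum]
    refine Finset.prod_dvd_prod_of_dvd _ _ fun i _ => ?_
    have he : k i / Pn = (k i / p ^ m) / p := by
      rw [Nat.div_div_eq_div_mul, hPn, pow_succ]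
    rw [he]
    exact (pow_dvd_pow p (stmt7_div_le_pval_factorial _)).trans pow_padicValNat_dvd
  have hdvdZ : (p:ℤ_[p]) ^ r ∣ (D : ℤ_[p]) := by
    have := Nat.cast_dvd_cast (α := ℤ_[p]) hdvd
    push_cast at this
    exact this
  have hDnorm : ‖(D:ℤ_[p])‖ ≤ (p:ℝ) ^ (-(r:ℤ)) := (stmt7_norm_le_iff_dvd _ _).mpr hdvdZ
  have hcast : (∏ i, (Nat.factorial (k i / p ^ m) : ℤ_[p])) = (D : ℤ_[p]) := by
    rw [hD]; push_cast; rfl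
  have h1 : ‖a k‖ ≤ (p:ℝ) ^ (-(r:ℤ)) := by
    rw [hab k, hcast, norm_mul]
    calc ‖(D:ℤ_[p])‖ * ‖b k‖ ≤ ‖(D:ℤ_[p])‖ * 1 :=
          mul_le_mul_of_nonneg_left (PadicInt.norm_le_one _) (norm_nonneg _)
      _ = ‖(D:ℤ_[p])‖ := mul_one _
      _ ≤ _ := hDnorm
  have h2 : (p:ℝ)^(-(r:ℤ)) = (p:ℝ) ^ (-(r:ℝ)) := by
    rw [← Real.rpow_intCast]; congr 1; push_cast; ring
  rw [h2] at h1
  refine h1.trans ?_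
  rw [Real.rpow_le_rpow_left_iff hp1, neg_le_neg_iff]
  have key : ∀ i : Fin N, (k i : ℝ) / Pn - 1 ≤ ((k i / Pn : ℕ) : ℝ) := by
    intro i
    have h3 : (k i : ℕ) < Pn * (k i / Pn) + Pn := by
      have h3a := Nat.div_add_mod (k i) Pn
      have h3b := Nat.mod_lt (k i) hPnpos
      omega
    have h4 : (k i : ℝ) < (Pn:ℝ) * ((k i / Pn : ℕ) : ℝ) + Pn := by exact_mod_cast h3
    rw [sub_le_iff_le_add, div_le_iff₀ hPr]
    nlinarith
  have hsum : ((∑ i, k i : ℕ) : ℝ) / Pn - N ≤ (r:ℝ) := by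
    have h5 : ((∑ i, k i : ℕ) : ℝ) = ∑ i, (k i : ℝ) := by push_cast; rfl
    have h6 : (r:ℝ) = ∑ i, ((k i / Pn : ℕ) : ℝ) := by rw [hr]; push_cast; rfl
    rw [h5, h6, Finset.sum_div]
    have h7 := Finset.sum_le_sum (s := Finset.univ) (fun i _ => key i)
    rw [Finset.sum_sub_distrib, Finset.sum_const, Finset.card_univ, Fintype.card_fin] at h7
    simpa using h7
  have h8 : ((p:ℝ)^(m+1)) = (Pn:ℝ) := by rw [hPn]; push_cast; ring
  rw [h8, div_eq_mul_inv] at *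
  have h9 : ((∑ i, k i : ℕ) : ℝ) * (Pn:ℝ)⁻¹ = (Pn:ℝ)⁻¹ * ((∑ i, k i : ℕ) : ℝ) := mul_comm _ _
  linarith [hsum]

private lemma stmt7_three_to_one (a : (Fin N →₀ ℕ) → ℤ_[p])
    (h : ∃ η c : ℝ, 0 < η ∧ ∀ k : Fin N →₀ ℕ,
        ‖a k‖ ≤ (p : ℝ) ^ (-(η * (∑ i, k i : ℕ) + c))) :
    ∃ m : ℕ, ∃ b : (Fin N →₀ ℕ) → ℤ_[p],
        (∀ k : Fin N →₀ ℕ,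
          a k = (∏ i, (Nat.factorial (k i / p ^ m) : ℤ_[p])) * b k) ∧
        ∀ t : ℝ, ∃ M : ℕ, ∀ k : Fin N →₀ ℕ,
          M ≤ ∑ i, k i → ‖b k‖ ≤ (p : ℝ) ^ (-t) := by
  obtain ⟨η, c, hη, hbd⟩ := h
  have hp1 : (1:ℝ) < p := stmt7_hp1
  have hp0 : (0:ℝ) < p := lt_trans one_pos hp1
  obtain ⟨n, hn⟩ := exists_nat_gt (max (2/η) (-2*c/η))
  set Pn : ℕ := p ^ n with hPn
  have hPnpos : 0 < Pn := pow_pos hp.out.pos _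
  have hNP : (n:ℝ) ≤ (Pn:ℝ) := by
    have h1 : n < 2 ^ n := Nat.lt_two_pow_self
    have h2 : 2 ^ n ≤ p ^ n := Nat.pow_le_pow_left hp.out.two_le n
    exact_mod_cast le_of_lt (lt_of_lt_of_le h1 h2)
  have hPη : 2/η < (Pn:ℝ) := lt_of_lt_of_le (lt_of_le_of_lt (le_max_left _ _) hn) hNP
  have hPc : -2*c/η < (Pn:ℝ) := lt_of_lt_of_le (lt_of_le_of_lt (le_max_right _ _) hn) hNP
  have hD0 : ∀ k : Fin N →₀ ℕ, (∏ i, Nat.factorial (k i / Pn)) ≠ 0 :=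
    fun k => Finset.prod_ne_zero_iff.mpr fun i _ => (Nat.factorial_pos _).ne'
  have hw : ∀ k : Fin N →₀ ℕ,
      (padicValNat p (∏ i, Nat.factorial (k i / Pn)) : ℝ) ≤ η/2 * ((∑ i, k i : ℕ) : ℝ) := by
    intro k
    have h1 : (∏ i, Nat.factorial (k i / Pn)) ∣ Nat.factorial (∑ i, k i / Pn) :=
      Nat.prod_factorial_dvd_factorial_sum _ _
    have h2 : padicValNat p (∏ i, Nat.factorial (k i / Pn))
        ≤ padicValNat p (Nat.factorial (∑ i, k i / Pn)) := by
      rw [← padicValNat_dvd_iff_le (Nat.factorial_ne_zero _)]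
      exact dvd_trans pow_padicValNat_dvd h1
    have h3 : padicValNat p (∏ i, Nat.factorial (k i / Pn)) ≤ ∑ i, k i / Pn :=
      le_trans h2 (stmt7_pval_factorial_le _)
    have h4 : ((∑ i, k i / Pn : ℕ) : ℝ) ≤ ((∑ i, k i : ℕ) : ℝ) / Pn := by
      push_cast
      rw [Finset.sum_div]
      exact Finset.sum_le_sum fun i _ => Nat.cast_div_le
    have h5 : ((∑ i, k i : ℕ) : ℝ) / Pn ≤ η/2 * ((∑ i, k i : ℕ):ℝ) := by
      rw [div_le_iff₀ (by exact_mod_cast hPnpos)]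
      have hs0 : (0:ℝ) ≤ ((∑ i, k i : ℕ):ℝ) := Nat.cast_nonneg _
      have h5a : (2:ℝ) < Pn * η := by rwa [div_lt_iff₀ hη] at hPη
      nlinarith
    calc (padicValNat p (∏ i, Nat.factorial (k i / Pn)) : ℝ)
        ≤ ((∑ i, k i / Pn : ℕ) : ℝ) := by exact_mod_cast h3
      _ ≤ _ := le_trans h4 h5
  have hdvd : ∀ k : Fin N →₀ ℕ, ((∏ i, Nat.factorial (k i / Pn) : ℕ) : ℤ_[p]) ∣ a k := by
    intro k
    by_cases hbig : ∀ i, k i < Pn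
    · have hD1 : (∏ i, Nat.factorial (k i / Pn)) = 1 :=
        Finset.prod_eq_one fun i _ => by rw [Nat.div_eq_of_lt (hbig i)]; rfl
      rw [hD1, Nat.cast_one]
      exact one_dvd _
    · push_neg at hbig
      obtain ⟨i0, hi0⟩ := hbig
      have hsP : (Pn:ℝ) ≤ ((∑ i, k i : ℕ) : ℝ) := by
        have h0 : Pn ≤ ∑ i, k i :=
          le_trans hi0 (Finset.single_le_sum (fun i _ => Nat.zero_le _) (Finset.mem_univ i0))
        exact_mod_cast h0
      have hwle : ((padicValNat p (∏ i, Nat.factorial (k i / Pn)) : ℕ):ℝ)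
          ≤ η * ((∑ i, k i : ℕ):ℝ) + c := by
        have h1 := hw k
        have h2 : -c < η/2 * ((∑ i, k i : ℕ):ℝ) := by
          have h2a : -2*c < Pn * η := by rwa [div_lt_iff₀ hη] at hPc
          nlinarith
        linarith
      have h3 : ‖a k‖ ≤ (p:ℝ) ^ (-((padicValNat p (∏ i, Nat.factorial (k i / Pn)) : ℕ):ℤ)) := by
        refine (hbd k).trans ?_
        rw [show ((p:ℝ) ^ (-((padicValNat p (∏ i, Nat.factorial (k i / Pn)) : ℕ):ℤ))
            = (p:ℝ) ^ (-((padicValNat p (∏ i, Nat.factorial (k i / Pn)) : ℕ):ℝ))) from by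
          rw [← Real.rpow_intCast]; congr 1; rw [Int.cast_neg, Int.cast_natCast]]
        rw [Real.rpow_le_rpow_left_iff hp1]
        linarith
      exact dvd_trans (stmt7_natCast_dvd_pow _ (hD0 k)) ((stmt7_norm_le_iff_dvd _ _).mp h3)
  choose b hb2 using hdvd
  refine ⟨n, b, fun k => ?_, fun t => ?_⟩
  · rw [hb2 k]
    congr 1
    push_cast
    rfl
  · obtain ⟨M, hM⟩ := exists_nat_gt ((t - c) * (2/η))
    refine ⟨M, fun k hk => ?_⟩
    have hDn : ‖((∏ i, Nat.factorial (k i / Pn) : ℕ) : ℤ_[p])‖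
        = (p:ℝ) ^ (-((padicValNat p (∏ i, Nat.factorial (k i / Pn)) : ℕ):ℝ)) := by
      rw [stmt7_norm_natCast _ (hD0 k), ← Real.rpow_intCast]
      congr 1
      rw [Int.cast_neg, Int.cast_natCast]
    have hs : ((t - c) * (2/η)) < ((∑ i, k i : ℕ) : ℝ) :=
      lt_of_lt_of_le hM (by exact_mod_cast hk)
    have h2b : (η/2) * ((t-c) * (2/η)) = t - c := by field_simp
    have h2 : t - c ≤ η/2 * ((∑ i, k i : ℕ):ℝ) := by
      have h2c := mul_lt_mul_of_pos_left hs (half_pos hη)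
      rw [h2b] at h2c
      linarith [h2c]
    have hkey : ((padicValNat p (∏ i, Nat.factorial (k i / Pn)) : ℕ):ℝ) + t
        ≤ η * ((∑ i, k i : ℕ):ℝ) + c := by
      have h1 := hw k
      linarith
    have h3 : ‖a k‖ ≤ (p:ℝ) ^ (-(((padicValNat p (∏ i, Nat.factorial (k i / Pn)) : ℕ):ℝ) + t)) :=
      (hbd k).trans (by rw [Real.rpow_le_rpow_left_iff hp1]; linarith)
    rw [hb2 k, norm_mul, hDn] at h3
    rw [neg_add, Real.rpow_add hp0] at h3
    exact le_of_mul_le_mul_left h3 (Real.rpow_pos_of_pos hp0 _)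

end mainSec

/-- Characterization of the weakly completed distribution algebra `D†(𝒢)` inside
the `p`-adic completion of the classical distribution algebra, in terms of the
coefficients `a_k ∈ ℤ_p` (with `‖x‖ = p^{-v_p(x)}`, so `v_p(x) ≥ t ↔ ‖x‖ ≤ p^{-t}`):
given that `v_p(a_k) → ∞` as `|k| → ∞`, the following are equivalent:
(i) for some level `m`, each `a_k` is divisible by `∏ᵢ q^{(m)}_{kᵢ}!` with the
valuations of the quotients tending to `∞`;
(ii) for some `α > 0`, `β`, whenever `p^{i+1} ∤ a_k` one has `|k| ≤ α·i + β`;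
(iii) for some `η > 0`, `c`, one has `v_p(a_k) ≥ η·|k| + c` for all `k`. -/
theorem stmt_7 (p : ℕ) [Fact p.Prime] (N : ℕ) (hN : 1 ≤ N)
    (a : (Fin N →₀ ℕ) → ℤ_[p])
    (ha : ∀ t : ℝ, ∃ M : ℕ, ∀ k : Fin N →₀ ℕ,
      M ≤ ∑ i, k i → ‖a k‖ ≤ (p : ℝ) ^ (-t)) :
    ((∃ m : ℕ, ∃ b : (Fin N →₀ ℕ) → ℤ_[p],
        (∀ k : Fin N →₀ ℕ,
          a k = (∏ i, (Nat.factorial (k i / p ^ m) : ℤ_[p])) * b k) ∧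
        ∀ t : ℝ, ∃ M : ℕ, ∀ k : Fin N →₀ ℕ,
          M ≤ ∑ i, k i → ‖b k‖ ≤ (p : ℝ) ^ (-t)) ↔
      (∃ α β : ℝ, 0 < α ∧ ∀ i : ℕ, ∀ k : Fin N →₀ ℕ,
        ¬ (p : ℤ_[p]) ^ (i + 1) ∣ a k → ((∑ i, k i : ℕ) : ℝ) ≤ α * i + β)) ∧
    ((∃ α β : ℝ, 0 < α ∧ ∀ i : ℕ, ∀ k : Fin N →₀ ℕ,
        ¬ (p : ℤ_[p]) ^ (i + 1) ∣ a k → ((∑ i, k i : ℕ) : ℝ) ≤ α * i + β) ↔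
      (∃ η c : ℝ, 0 < η ∧ ∀ k : Fin N →₀ ℕ,
        ‖a k‖ ≤ (p : ℝ) ^ (-(η * (∑ i, k i : ℕ) + c)))) := by
  constructor
  · exact ⟨fun h1 => stmt7_three_to_two a (stmt7_one_to_three a h1),
      fun h2 => stmt7_three_to_one a (stmt7_two_to_three a h2)⟩
  · exact ⟨stmt7_two_to_three a, stmt7_three_to_two a⟩
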